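/- Let H be finite-dimensional and {Λ_i} a g-frame with frame operator S. For every alternate dual g-frame {Γ_i} of {Λ_i}, ∑_i ‖Λ_i − Γ_i‖_F² ≥ ∑_i ‖Λ_i − Λ_i S^{-1}‖_F², with equality if and only if Γ_i = Λ_i S^{-1} for all i. -/

import Mathlib

/-- The Hilbert–Schmidt norm squared `‖T‖_F²` of an operator on a finite-dimensional
Hilbert space. -/
noncomputable def hsNormSq {H K : Type*} [NormedAddCommGroup H] [InnerProductSpace ℂ H]
    [FiniteDimensional ℂ H] [NormedAddCommGroup K] [InnerProductSpace ℂ K]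
    (T : H →L[ℂ] K) : ℝ :=
  ∑ k, ‖T (stdOrthonormalBasis ℂ H k)‖ ^ 2

private lemma summable_finset_sum' {ι γ : Type*} (s : Finset γ) {f : γ → ι → ℝ}
    (h : ∀ k ∈ s, Summable (f k)) : Summable fun i => ∑ k ∈ s, f k i := by
  classical
  induction s using Finset.induction_on with
  | empty => simpa using summable_zero
  | @insert a s hx ih =>
    simp only [Finset.sum_insert hx]
    exact (h a (Finset.mem_insert_self a s)).add
      (ih fun k hk => h k (Finset.mem_insert_of_mem hk))

/-- For a g-frame `{Λ i}` on a finite-dimensional Hilbert space with frame operator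
`S` and any alternate dual g-frame `{Γ i}`:
`∑ i ‖Λ i − Γ i‖_F² ≥ ∑ i ‖Λ i − Λ i S⁻¹‖_F²`, with equality iff `Γ i = Λ i S⁻¹`. -/
theorem gframe_alternate_dual_best_approx_hs
    {H K : Type*} [NormedAddCommGroup H] [InnerProductSpace ℂ H] [FiniteDimensional ℂ H]
    [NormedAddCommGroup K] [InnerProductSpace ℂ K] [CompleteSpace K]
    {I : Type*} (Λ Γ : I → (H →L[ℂ] K)) (S Sinv : H →L[ℂ] H)
    (A B C D : ℝ) (hA : 0 < A) (hB : 0 < B) (hC : 0 < C) (hD : 0 < D)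
    (hΛsum : ∀ x : H, Summable fun i => ‖Λ i x‖ ^ 2)
    (hΛlow : ∀ x : H, A * ‖x‖ ^ 2 ≤ ∑' i, ‖Λ i x‖ ^ 2)
    (hΛup : ∀ x : H, ∑' i, ‖Λ i x‖ ^ 2 ≤ B * ‖x‖ ^ 2)
    (hΓsum : ∀ x : H, Summable fun i => ‖Γ i x‖ ^ 2)
    (hΓlow : ∀ x : H, C * ‖x‖ ^ 2 ≤ ∑' i, ‖Γ i x‖ ^ 2)
    (hΓup : ∀ x : H, ∑' i, ‖Γ i x‖ ^ 2 ≤ D * ‖x‖ ^ 2)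
    (hS : ∀ x : H, HasSum (fun i => (Λ i).adjoint (Λ i x)) (S x))
    (hSinv₁ : ∀ x : H, S (Sinv x) = x) (hSinv₂ : ∀ x : H, Sinv (S x) = x)
    (hdual : ∀ x : H, HasSum (fun i => (Λ i).adjoint (Γ i x)) x) :
    (∑' i, hsNormSq (Λ i - (Λ i) ∘L Sinv)) ≤ ∑' i, hsNormSq (Λ i - Γ i) ∧
    ((∑' i, hsNormSq (Λ i - Γ i)) = (∑' i, hsNormSq (Λ i - (Λ i) ∘L Sinv))
      ↔ ∀ i, Γ i = (Λ i) ∘L Sinv) := by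
  classical
  set e := stdOrthonormalBasis ℂ H with he
  set T : I → (H →L[ℂ] K) := fun i => Λ i - (Λ i) ∘L Sinv with hTdef
  set Δ : I → (H →L[ℂ] K) := fun i => Γ i - (Λ i) ∘L Sinv with hΔdef
  -- summability of pointwise squared norms of differences
  have hsq : ∀ (P Q : I → H →L[ℂ] K), (∀ x, Summable fun i => ‖P i x‖ ^ 2) →
      (∀ x, Summable fun i => ‖Q i x‖ ^ 2) →
      ∀ x, Summable fun i => ‖(P i - Q i) x‖ ^ 2 := by
    intro P Q hP hQ x
    apply Summable.of_nonneg_of_le (fun i => by positivity) (fun i => ?_)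
      (((hP x).add (hQ x)).mul_left 2)
    have h1 : ‖(P i - Q i) x‖ ≤ ‖P i x‖ + ‖Q i x‖ := by
      simpa using norm_sub_le (P i x) (Q i x)
    nlinarith [h1, sq_nonneg (‖P i x‖ - ‖Q i x‖), norm_nonneg ((P i - Q i) x),
      norm_nonneg (P i x), norm_nonneg (Q i x)]
  have hΛS : ∀ x : H, Summable fun i => ‖((Λ i) ∘L Sinv) x‖ ^ 2 := fun x => hΛsum (Sinv x)
  have hTsum : ∀ x, Summable fun i => ‖T i x‖ ^ 2 := hsq Λ (fun i => (Λ i) ∘L Sinv) hΛsum hΛS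
  have hΔsum : ∀ x, Summable fun i => ‖Δ i x‖ ^ 2 := hsq Γ (fun i => (Λ i) ∘L Sinv) hΓsum hΛS
  have hΛΓsum : ∀ x, Summable fun i => ‖(Λ i - Γ i) x‖ ^ 2 := hsq Λ Γ hΛsum hΓsum
  -- summability of HS norms
  have hsHS : ∀ (P : I → H →L[ℂ] K), (∀ x, Summable fun i => ‖P i x‖ ^ 2) →
      Summable fun i => hsNormSq (P i) := by
    intro P hP
    exact summable_finset_sum' Finset.univ fun k _ => hP (e k)
  have hsT : Summable fun i => hsNormSq (T i) := hsHS T hTsum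
  have hsΔ : Summable fun i => hsNormSq (Δ i) := hsHS Δ hΔsum
  have hsΛΓ : Summable fun i => hsNormSq (Λ i - Γ i) := hsHS _ hΛΓsum
  -- the cross terms vanish
  have hzero : ∀ x : H, HasSum (fun i => (Λ i).adjoint (Δ i x)) 0 := by
    intro x
    have h2 := hS (Sinv x)
    rw [hSinv₁ x] at h2
    have h3 := (hdual x).sub h2
    simpa [hΔdef, map_sub, sub_self] using h3
  have hinner : ∀ x : H, HasSum (fun i => (inner ℂ (T i x) (Δ i x) : ℂ)) 0 := by
    intro x
    have h0 := (hzero x).mapL (innerSL ℂ (x - Sinv x))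
    rw [map_zero] at h0
    have heq : (fun i => (innerSL ℂ (x - Sinv x)) ((Λ i).adjoint (Δ i x)))
        = fun i => (inner ℂ (T i x) (Δ i x) : ℂ) := by
      funext i
      have h1 : (innerSL ℂ (x - Sinv x)) ((Λ i).adjoint (Δ i x))
          = inner ℂ ((Λ i) (x - Sinv x)) (Δ i x) :=
        ContinuousLinearMap.adjoint_inner_right (Λ i) _ _
      rw [h1]
      congr 1
      simp [hTdef, map_sub]
    rwa [heq] at h0
  have hre : ∀ x : H, HasSum (fun i => RCLike.re (inner ℂ (T i x) (Δ i x) : ℂ)) 0 := by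
    intro x
    simpa using (hinner x).mapL (RCLike.reCLM (K := ℂ))
  -- pointwise HS decomposition
  have hdecomp : ∀ i, hsNormSq (Λ i - Γ i)
      = hsNormSq (T i) + hsNormSq (Δ i)
        - 2 * ∑ k, RCLike.re (inner ℂ (T i (e k)) (Δ i (e k)) : ℂ) := by
    intro i
    unfold hsNormSq
    rw [Finset.mul_sum, ← Finset.sum_add_distrib, ← Finset.sum_sub_distrib]
    refine Finset.sum_congr rfl fun k _ => ?_
    have hpt : (Λ i - Γ i) (e k) = T i (e k) - Δ i (e k) := by
      simp only [hTdef, hΔdef, ContinuousLinearMap.sub_apply, sub_sub_sub_cancel_right]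
    rw [hpt, norm_sub_sq (𝕜 := ℂ)]
    ring
  -- cross term sum
  have hc : Summable fun i => ∑ k, RCLike.re (inner ℂ (T i (e k)) (Δ i (e k)) : ℂ) :=
    summable_finset_sum' Finset.univ fun k _ => (hre (e k)).summable
  have hctsum : (∑' i, ∑ k, RCLike.re (inner ℂ (T i (e k)) (Δ i (e k)) : ℂ)) = 0 := by
    rw [Summable.tsum_finsetSum fun k _ => (hre (e k)).summable]
    exact Finset.sum_eq_zero fun k _ => (hre (e k)).tsum_eq
  -- the key identity
  have hmain : (∑' i, hsNormSq (Λ i - Γ i))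
      = (∑' i, hsNormSq (T i)) + ∑' i, hsNormSq (Δ i) := by
    calc (∑' i, hsNormSq (Λ i - Γ i))
        = ∑' i, (hsNormSq (T i) + hsNormSq (Δ i)
            - 2 * ∑ k, RCLike.re (inner ℂ (T i (e k)) (Δ i (e k)) : ℂ)) :=
          tsum_congr hdecomp
      _ = (∑' i, (hsNormSq (T i) + hsNormSq (Δ i)))
            - ∑' i, 2 * ∑ k, RCLike.re (inner ℂ (T i (e k)) (Δ i (e k)) : ℂ) :=
          Summable.tsum_sub (hsT.add hsΔ) (hc.mul_left 2)
      _ = (∑' i, hsNormSq (T i)) + ∑' i, hsNormSq (Δ i) := by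
          rw [Summable.tsum_add hsT hsΔ, tsum_mul_left, hctsum]
          ring
  have hΔnonneg : ∀ i, 0 ≤ hsNormSq (Δ i) := by
    intro i
    exact Finset.sum_nonneg fun k _ => by positivity
  have hΔtsum_nonneg : 0 ≤ ∑' i, hsNormSq (Δ i) := tsum_nonneg hΔnonneg
  constructor
  · rw [hmain]; linarith
  constructor
  · intro h
    have hzeroΔ : (∑' i, hsNormSq (Δ i)) = 0 := by rw [hmain] at h; linarith
    intro i
    have hle : hsNormSq (Δ i) ≤ 0 := by
      calc hsNormSq (Δ i) ≤ ∑' j, hsNormSq (Δ j) :=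
            Summable.le_tsum hsΔ i fun j _ => hΔnonneg j
        _ = 0 := hzeroΔ
    have hi : hsNormSq (Δ i) = 0 := le_antisymm hle (hΔnonneg i)
    have hk : ∀ k, Δ i (e k) = 0 := by
      intro k
      have hi' : ∑ k, ‖Δ i (stdOrthonormalBasis ℂ H k)‖ ^ 2 = 0 := hi
      have h0 := (Finset.sum_eq_zero_iff_of_nonneg
        (fun k (_ : k ∈ Finset.univ) => by positivity)).1 hi' k (Finset.mem_univ k)
      have hn : ‖Δ i (e k)‖ = 0 := (pow_eq_zero_iff (by norm_num : (2:ℕ) ≠ 0)).mp h0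
      exact norm_eq_zero.mp hn
    have hΔ0 : Δ i = 0 := by
      apply ContinuousLinearMap.coe_injective
      apply Module.Basis.ext e.toBasis
      intro k
      simp [OrthonormalBasis.coe_toBasis, hk k]
    have : Γ i - (Λ i) ∘L Sinv = 0 := hΔ0
    exact sub_eq_zero.mp this
  · intro h
    exact tsum_congr fun i => by rw [h i]
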